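/- For every natural number n ≥ 1, the Eulerian elements ẽ⁽¹⁾ₙ, …, ẽ⁽ⁿ⁾ₙ in the rational group algebra ℚ[Sₙ] are mutually orthogonal idempotents summing to the identity: ẽ⁽ˡ⁾ₙ · ẽ⁽ˡ'⁾ₙ = ẽ⁽ˡ⁾ₙ if l = l' and 0 otherwise (for all 1 ≤ l, l' ≤ n), and Σ_{l=1}^{n} ẽ⁽ˡ⁾ₙ = 1. -/

import Mathlib

noncomputable section

/-- Number of descents of a permutation of `Fin n`: the number of positions `i`
(`1 ≤ i ≤ n-1`) with `σ(i) > σ(i+1)`, encoded as pairs `(p₁, p₂)` with `p₂ = p₁ + 1`. -/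
def descents {n : ℕ} (σ : Equiv.Perm (Fin n)) : ℕ :=
  (Finset.univ.filter fun p : Fin n × Fin n =>
    (p.2 : ℕ) = (p.1 : ℕ) + 1 ∧ σ p.2 < σ p.1).card

/-- `aCoeff n l j` is the coefficient of `X^l` in `(1/n!) ∏_{i=1}^n (X - j + i) ∈ ℚ[X]`. -/
def aCoeff (n l j : ℕ) : ℚ :=
  (((n.factorial : ℚ))⁻¹ • ∏ i ∈ Finset.Icc 1 n,
    (Polynomial.X + Polynomial.C ((i : ℚ) - (j : ℚ)))).coeff l

/-- The Eulerian element `ẽ⁽ˡ⁾ₙ = Σ_{σ ∈ Sₙ} aₙ^{l, des σ + 1} · σ ∈ ℚ[Sₙ]`. -/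
def eul (n l : ℕ) : MonoidAlgebra ℚ (Equiv.Perm (Fin n)) :=
  ∑ σ : Equiv.Perm (Fin n), MonoidAlgebra.single σ (aCoeff n l (descents σ + 1))


namespace EulerAux

open Finset Equiv
open scoped Classical

variable {n : ℕ}

/-- Injective key combining a word value with the index. -/
def fkey (w : Fin n → ℕ) : Fin n → ℕ := fun i => n * w i + i

lemma fkey_lt_iff {w : Fin n → ℕ} {i j : Fin n} :
    fkey w i < fkey w j ↔ w i < w j ∨ (w i = w j ∧ i < j) := by
  unfold fkey
  have hi : (i : ℕ) < n := i.2
  have hj : (j : ℕ) < n := j.2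
  have key : ∀ a b r s : ℕ, r < n → a < b → n * a + r < n * b + s := by
    intro a b r s hr hab
    have h1 : n * a + 1 * n ≤ n * b := by
      calc n * a + 1 * n = n * (a + 1) := by ring
      _ ≤ n * b := Nat.mul_le_mul_left n hab
    omega
  constructor
  · intro h
    rcases lt_trichotomy (w i) (w j) with h1 | h1 | h1
    · exact Or.inl h1
    · refine Or.inr ⟨h1, ?_⟩
      rw [h1] at h
      exact Fin.lt_def.mpr (Nat.lt_of_add_lt_add_left h)
    · exact absurd (key (w j) (w i) (j:ℕ) (i:ℕ) hj h1) (by omega)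
  · rintro (h | ⟨h1, h2⟩)
    · exact key _ _ _ _ hi h
    · rw [h1]
      exact Nat.add_lt_add_left (Fin.lt_def.mp h2) _

lemma fkey_injective (w : Fin n → ℕ) : Function.Injective (fkey w) := by
  have key : ∀ p q : Fin n, p < q → fkey w p ≠ fkey w q := by
    intro p q hpq
    rcases lt_trichotomy (w p) (w q) with h1 | h1 | h1
    · exact ne_of_lt (fkey_lt_iff.mpr (Or.inl h1))
    · exact ne_of_lt (fkey_lt_iff.mpr (Or.inr ⟨h1, hpq⟩))
    · exact (ne_of_lt (fkey_lt_iff.mpr (Or.inl h1))).symm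
  intro i j h
  rcases lt_trichotomy i j with h1 | h1 | h1
  · exact absurd h (key _ _ h1)
  · exact h1
  · exact absurd h.symm (key _ _ h1)

/-- `σ` stably sorts the word `w`. -/
def Sorts (w : Fin n → ℕ) (σ : Equiv.Perm (Fin n)) : Prop :=
  StrictMono (fkey w ∘ σ)

/-- The stable sorting permutation of a word. -/
def sortPerm (w : Fin n → ℕ) : Equiv.Perm (Fin n) := Tuple.sort (fkey w)

lemma sorts_sortPerm (w : Fin n → ℕ) : Sorts w (sortPerm w) := by
  have h1 : Monotone (fkey w ∘ Tuple.sort (fkey w)) := Tuple.monotone_sort (fkey w)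
  have h2 : Function.Injective (fkey w ∘ Tuple.sort (fkey w)) :=
    (fkey_injective w).comp (Tuple.sort (fkey w)).injective
  exact h1.strictMono_of_injective h2

lemma sorts_unique {w : Fin n → ℕ} {σ τ : Equiv.Perm (Fin n)}
    (hσ : Sorts w σ) (hτ : Sorts w τ) : σ = τ := by
  unfold Sorts at hσ hτ
  have hr : Set.range (fkey w ∘ σ) = Set.range (fkey w ∘ τ) := by
    rw [Set.range_comp, Set.range_comp, σ.surjective.range_eq, τ.surjective.range_eq]
  haveI : WellFoundedLT (Fin n) := inferInstance
  have := (hσ.range_inj hτ).mp hr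
  ext i
  exact Fin.val_eq_of_eq (fkey_injective w (congrFun this i))

lemma sorts_iff {w : Fin n → ℕ} {σ : Equiv.Perm (Fin n)} :
    Sorts w σ ↔ sortPerm w = σ :=
  ⟨fun h => sorts_unique (sorts_sortPerm w) h, fun h => h ▸ sorts_sortPerm w⟩

lemma sorts_radix {a : ℕ} {v u : Fin n → ℕ} (hv : ∀ i, v i < a)
    {σ1 σ2 : Equiv.Perm (Fin n)} (h1 : Sorts v σ1) (h2 : Sorts (u ∘ σ1) σ2) :
    Sorts (fun i => a * u i + v i) (σ1 * σ2) := by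
  unfold Sorts at *
  intro i j hij
  have H2 := h2 hij
  simp only [Function.comp_apply] at H2
  rw [fkey_lt_iff] at H2
  simp only [Function.comp_apply] at H2
  have hmul : ∀ x, (σ1 * σ2) x = σ1 (σ2 x) := fun x => rfl
  simp only [Function.comp_apply, hmul]
  rw [fkey_lt_iff]
  set x := σ1 (σ2 i) with hx
  set y := σ1 (σ2 j) with hy
  rcases H2 with H | ⟨He, Hlt⟩
  · left
    calc a * u x + v x < a * u x + a := by have := hv x; omega
    _ = a * (u x + 1) := by ring
    _ ≤ a * u y := Nat.mul_le_mul_left a H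
    _ ≤ a * u y + v y := Nat.le_add_right _ _
  · have hA : a * u x = a * u y := by rw [show u x = u y from He]
    have H1 := h1 Hlt
    simp only [Function.comp_apply] at H1
    rw [fkey_lt_iff] at H1
    rw [← hx, ← hy] at H1
    rcases H1 with H | ⟨He2, Hlt2⟩
    · left; omega
    · right; exact ⟨by omega, Hlt2⟩

/-- The "k-shuffle" element `Σ_w single (sortPerm w) 1`. -/
def BB (n k : ℕ) : MonoidAlgebra ℚ (Equiv.Perm (Fin n)) :=
  ∑ w : Fin n → Fin k, MonoidAlgebra.single (sortPerm fun i => (w i : ℕ)) 1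

lemma sortPerm_combined {a b : ℕ} (v : Fin n → Fin a) (u : Fin n → Fin b) :
    sortPerm (fun i => a * (u i : ℕ) + (v i : ℕ)) =
      sortPerm (fun i => (v i : ℕ)) *
        sortPerm (fun i => (u (sortPerm (fun i => (v i : ℕ)) i) : ℕ)) := by
  apply sorts_iff.mp
  exact sorts_radix (fun i => (v i).2) (sorts_sortPerm _)
    (sorts_sortPerm fun i => (u (sortPerm (fun i => (v i : ℕ)) i) : ℕ))

lemma BB_mul (n a b : ℕ) : BB n a * BB n b = BB n (a * b) := by
  rw [BB, BB, Finset.sum_mul_sum]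
  simp only [MonoidAlgebra.single_mul_single, one_mul]
  have step1 : ∀ v : Fin n → Fin a,
      (∑ u : Fin n → Fin b, MonoidAlgebra.single
        (sortPerm (fun i => ((v i : ℕ))) * sortPerm (fun i => ((u i : ℕ)))) (1:ℚ)) =
      ∑ u : Fin n → Fin b, MonoidAlgebra.single
        (sortPerm (fun i => (a * (u i : ℕ) + (v i : ℕ)))) (1:ℚ) := by
    intro v
    set σ1 := sortPerm (fun i => ((v i : ℕ))) with hσ1
    have := Equiv.sum_comp (Equiv.arrowCongr σ1.symm (Equiv.refl (Fin b)))
      (fun u : Fin n → Fin b => MonoidAlgebra.single (σ1 * sortPerm (fun i => ((u i : ℕ)))) (1:ℚ))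
    rw [← this]
    apply Finset.sum_congr rfl
    intro u _
    simp only [Equiv.arrowCongr_apply, Equiv.coe_refl, Function.comp_def, id_eq,
      Equiv.symm_symm]
    rw [sortPerm_combined v u]
  rw [Finset.sum_congr rfl (fun v _ => step1 v)]
  rw [← Fintype.sum_prod_type']
  apply Fintype.sum_bijective
    (fun p : (Fin n → Fin a) × (Fin n → Fin b) =>
      fun i => (⟨a * (p.2 i : ℕ) + (p.1 i : ℕ), by
        have h1 := (p.1 i).2; have h2 := (p.2 i).2
        calc a * (p.2 i : ℕ) + (p.1 i : ℕ) < a * (p.2 i : ℕ) + a := by omega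
        _ = a * ((p.2 i : ℕ) + 1) := by ring
        _ ≤ a * b := Nat.mul_le_mul_left a h2⟩ : Fin (a * b)))
  · rw [Fintype.bijective_iff_injective_and_card]
    constructor
    · rintro ⟨v, u⟩ ⟨v', u'⟩ h
      have hpt : ∀ i, a * (u i : ℕ) + (v i : ℕ) = a * (u' i : ℕ) + (v' i : ℕ) := by
        intro i
        have := congrFun h i
        simpa [Fin.ext_iff] using this
      have huv : ∀ i, (u i : ℕ) = (u' i : ℕ) ∧ (v i : ℕ) = (v' i : ℕ) := by
        intro i
        have h1 := (v i).2; have h2 := (v' i).2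
        have hp := hpt i
        have e1 : (a * (u i : ℕ) + (v i : ℕ)) % a = (v i : ℕ) % a := Nat.mul_add_mod a _ _
        have e2 : (a * (u' i : ℕ) + (v' i : ℕ)) % a = (v' i : ℕ) % a := Nat.mul_add_mod a _ _
        have hva : (v i : ℕ) % a = (v i : ℕ) := Nat.mod_eq_of_lt h1
        have hva' : (v' i : ℕ) % a = (v' i : ℕ) := Nat.mod_eq_of_lt h2
        have hmods : (v i : ℕ) % a = (v' i : ℕ) % a := by rw [← e1, ← e2, hp]
        have hveq : (v i : ℕ) = (v' i : ℕ) := by rw [← hva, hmods, hva']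
        refine ⟨?_, hveq⟩
        have ha : 0 < a := by omega
        exact Nat.eq_of_mul_eq_mul_left ha (by omega : a * (u i : ℕ) = a * (u' i : ℕ))
      ext i
      · exact (huv i).2
      · exact (huv i).1
    · simp [Fintype.card_fun, mul_pow, mul_comm]
  · rintro ⟨v, u⟩
    rfl

def desAt (τ : Equiv.Perm (Fin n)) (j : ℕ) : Prop :=
  if h : j + 1 < n then τ ⟨j+1, h⟩ < τ ⟨j, Nat.lt_of_succ_lt h⟩ else False

instance (τ : Equiv.Perm (Fin n)) (j : ℕ) : Decidable (desAt τ j) := by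
  unfold desAt; infer_instance

lemma desAt_iff {τ : Equiv.Perm (Fin n)} {j : ℕ} (h : j + 1 < n) :
    desAt τ j ↔ τ ⟨j+1, h⟩ < τ ⟨j, Nat.lt_of_succ_lt h⟩ := by
  unfold desAt; rw [dif_pos h]

lemma desAt_false {τ : Equiv.Perm (Fin n)} {j : ℕ} (h : ¬ (j + 1 < n)) : ¬ desAt τ j := by
  unfold desAt; rw [dif_neg h]; exact not_false

def cfun (τ : Equiv.Perm (Fin n)) (m : ℕ) : ℕ :=
  ((Finset.range m).filter (fun j => desAt τ j)).card

lemma cfun_succ (τ : Equiv.Perm (Fin n)) (m : ℕ) :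
    cfun τ (m+1) = cfun τ m + (if desAt τ m then 1 else 0) := by
  unfold cfun
  rw [Finset.range_add_one, Finset.filter_insert]
  split
  · rw [Finset.card_insert_of_notMem (by simp)]
  · simp

lemma cfun_le (τ : Equiv.Perm (Fin n)) (m : ℕ) : cfun τ m ≤ m := by
  calc cfun τ m ≤ (Finset.range m).card := Finset.card_filter_le _ _
  _ = m := Finset.card_range m

lemma cfun_mono (τ : Equiv.Perm (Fin n)) {m m' : ℕ} (h : m ≤ m') : cfun τ m ≤ cfun τ m' :=
  Finset.card_le_card (Finset.filter_subset_filter _ (Finset.range_subset_range.mpr h))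

lemma cfun_last (τ : Equiv.Perm (Fin n)) (hn : 1 ≤ n) : cfun τ n = cfun τ (n-1) := by
  have h := cfun_succ τ (n-1)
  rw [if_neg (desAt_false (by omega)), Nat.sub_add_cancel hn] at h
  omega

lemma des_le (τ : Equiv.Perm (Fin n)) : cfun τ n ≤ n - 1 := by
  unfold cfun
  calc ((Finset.range n).filter (fun j => desAt τ j)).card
      ≤ (Finset.range (n-1)).card := by
        apply Finset.card_le_card
        intro j hj
        rw [Finset.mem_filter, Finset.mem_range] at hj
        rw [Finset.mem_range]
        by_contra hc
        exact desAt_false (by omega) hj.2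
  _ = n - 1 := Finset.card_range _

lemma descents_eq (τ : Equiv.Perm (Fin n)) : descents τ = cfun τ n := by
  unfold descents cfun
  apply Finset.card_bij (fun p _ => (p.1 : ℕ))
  · rintro ⟨p1, p2⟩ hp
    rw [Finset.mem_filter] at hp
    obtain ⟨-, h1, h2⟩ := hp
    rw [Finset.mem_filter, Finset.mem_range]
    have hlt : (p1 : ℕ) + 1 < n := by rw [← h1]; exact p2.2
    refine ⟨p1.2, ?_⟩
    rw [desAt_iff hlt]
    have e2 : (⟨(p1:ℕ)+1, hlt⟩ : Fin n) = p2 := by rw [Fin.ext_iff]; exact h1.symm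
    have e1 : (⟨(p1:ℕ), Nat.lt_of_succ_lt hlt⟩ : Fin n) = p1 := rfl
    rw [e1, e2]; exact h2
  · rintro ⟨p1, p2⟩ hp ⟨q1, q2⟩ hq h
    rw [Finset.mem_filter] at hp hq
    have : p1 = q1 := Fin.ext h
    subst this
    have : p2 = q2 := Fin.ext (by rw [hp.2.1, hq.2.1])
    rw [this]
  · intro j hj
    rw [Finset.mem_filter, Finset.mem_range] at hj
    obtain ⟨hjn, hd⟩ := hj
    have hlt : j + 1 < n := by
      by_contra hc
      exact desAt_false hc hd
    refine ⟨(⟨j, hjn⟩, ⟨j+1, hlt⟩), ?_, rfl⟩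
    rw [Finset.mem_filter]
    refine ⟨Finset.mem_univ _, rfl, ?_⟩
    exact (desAt_iff hlt).mp hd

def Compat (w : Fin n → ℕ) (τ : Equiv.Perm (Fin n)) : Prop :=
  ∀ j : ℕ, ∀ h : j + 1 < n,
    fkey w (τ ⟨j, Nat.lt_of_succ_lt h⟩) < fkey w (τ ⟨j+1, h⟩)

lemma sorts_iff_compat {w : Fin n → ℕ} {τ : Equiv.Perm (Fin n)} :
    Sorts w τ ↔ Compat w τ := by
  constructor
  · intro hs j h
    exact hs (show (⟨j, Nat.lt_of_succ_lt h⟩ : Fin n) < ⟨j+1, h⟩ from by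
      rw [Fin.lt_def]; exact Nat.lt_succ_self j)
  · intro hc
    unfold Sorts
    cases n with
    | zero => intro i; exact i.elim0
    | succ m =>
      rw [Fin.strictMono_iff_lt_succ]
      intro i
      have h : (i : ℕ) + 1 < m + 1 := by omega
      have e1 : Fin.castSucc i = (⟨(i : ℕ), Nat.lt_of_succ_lt h⟩ : Fin (m+1)) := by
        apply Fin.ext; simp
      have e2 : i.succ = (⟨(i : ℕ) + 1, h⟩ : Fin (m+1)) := by
        apply Fin.ext; simp
      simp only [Function.comp_apply, e1, e2]
      exact hc i h

section Fiber

variable {τ : Equiv.Perm (Fin n)} {k : ℕ}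

lemma strictMono_nat_accum {f : Fin n → ℕ} (hf : StrictMono f) :
    ∀ q : ℕ, ∀ hq : q < n, ∀ p : ℕ, ∀ hp : p < n, p ≤ q →
      f ⟨p, hp⟩ + q ≤ f ⟨q, hq⟩ + p := by
  intro q
  induction q with
  | zero =>
    intro hq p hp hpq
    have : p = 0 := by omega
    subst this; omega
  | succ m ih =>
    intro hq p hp hpq
    by_cases h : p = m + 1
    · subst h; omega
    · have h1 := ih (by omega) p hp (by omega)
      have h2 : f ⟨m, by omega⟩ < f ⟨m+1, hq⟩ :=
        hf (Fin.mk_lt_mk.mpr (Nat.lt_succ_self m))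
      omega

lemma compat_accum {w : Fin n → ℕ} (hc : Compat w τ) :
    ∀ q : ℕ, ∀ hq : q < n, ∀ p : ℕ, ∀ hp : p < n, p ≤ q →
      w (τ ⟨p, hp⟩) + cfun τ q ≤ w (τ ⟨q, hq⟩) + cfun τ p := by
  intro q
  induction q with
  | zero =>
    intro hq p hp hpq
    have : p = 0 := by omega
    subst this; omega
  | succ m ih =>
    intro hq p hp hpq
    by_cases hpm : p = m + 1
    · subst hpm; omega
    · have h1 := ih (by omega) p hp (by omega)
      have K := fkey_lt_iff.mp (hc m hq)
      have hcs := cfun_succ τ m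
      by_cases hdes : desAt τ m
      · have hstrict : w (τ ⟨m, Nat.lt_of_succ_lt hq⟩) < w (τ ⟨m+1, hq⟩) := by
          rcases K with H | ⟨He, Hlt⟩
          · exact H
          · exact absurd Hlt (lt_asymm ((desAt_iff hq).mp hdes))
        rw [if_pos hdes] at hcs
        omega
      · have hle : w (τ ⟨m, Nat.lt_of_succ_lt hq⟩) ≤ w (τ ⟨m+1, hq⟩) := by
          rcases K with H | ⟨He, Hlt⟩
          · omega
          · omega
        rw [if_neg hdes] at hcs
        omega

lemma compat_bound (hn : 1 ≤ n) {w : Fin n → Fin k}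
    (hc : Compat (fun i => (w i : ℕ)) τ) (i : Fin n) :
    (w (τ i) : ℕ) + ((i : ℕ) - cfun τ (i : ℕ)) < k + (n - 1 - cfun τ n) := by
  have hlast : n - 1 < n := by omega
  have hacc := compat_accum hc (n-1) hlast (i : ℕ) i.2 (by omega)
  simp only [Fin.eta] at hacc
  have h1 : (w (τ ⟨n-1, hlast⟩) : ℕ) < k := (w _).2
  have h2 := cfun_last τ hn
  have h3 := cfun_le τ (i : ℕ)
  have h4 := cfun_mono τ (show (i : ℕ) ≤ n - 1 by omega)
  omega

lemma compat_strictMono_toZ {w : Fin n → Fin k}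
    (hc : Compat (fun i => (w i : ℕ)) τ) :
    StrictMono (fun i : Fin n => (w (τ i) : ℕ) + ((i : ℕ) - cfun τ (i : ℕ))) := by
  cases n with
  | zero => intro i; exact i.elim0
  | succ m =>
    rw [Fin.strictMono_iff_lt_succ]
    intro i
    have h : (i : ℕ) + 1 < m + 1 := by omega
    have e1 : Fin.castSucc i = (⟨(i : ℕ), Nat.lt_of_succ_lt h⟩ : Fin (m+1)) := by
      apply Fin.ext; simp
    have e2 : i.succ = (⟨(i : ℕ) + 1, h⟩ : Fin (m+1)) := by
      apply Fin.ext; simp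
    simp only [e1, e2]
    have K := fkey_lt_iff.mp (hc (i : ℕ) h)
    have hcs := cfun_succ τ (i : ℕ)
    have h3 := cfun_le τ (i : ℕ)
    by_cases hdes : desAt τ (i : ℕ)
    · have hstrict : (w (τ ⟨(i:ℕ), Nat.lt_of_succ_lt h⟩) : ℕ) < w (τ ⟨(i:ℕ)+1, h⟩) := by
        rcases K with H | ⟨He, Hlt⟩
        · exact H
        · exact absurd Hlt (lt_asymm ((desAt_iff h).mp hdes))
      rw [if_pos hdes] at hcs
      omega
    · have hle : (w (τ ⟨(i:ℕ), Nat.lt_of_succ_lt h⟩) : ℕ) ≤ w (τ ⟨(i:ℕ)+1, h⟩) := by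
        rcases K with H | ⟨He, Hlt⟩
        · omega
        · omega
      rw [if_neg hdes] at hcs
      omega

lemma z_lower {M : ℕ} {z : Fin n → Fin M} (hz : StrictMono z) (i : Fin n) :
    (i : ℕ) ≤ (z i : ℕ) := by
  have hzn : StrictMono (fun i : Fin n => (z i : ℕ)) :=
    fun a b h => Fin.lt_def.mp (hz h)
  have h0 : (0 : ℕ) < n := i.pos
  have := strictMono_nat_accum hzn (i : ℕ) i.2 0 h0 (Nat.zero_le _)
  simp only [Fin.eta] at this
  omega

lemma z_upper {M : ℕ} {z : Fin n → Fin M} (hn : 1 ≤ n) (hz : StrictMono z) (i : Fin n) :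
    (z i : ℕ) + (n - 1) ≤ (z ⟨n-1, by omega⟩ : ℕ) + (i : ℕ) := by
  have hzn : StrictMono (fun i : Fin n => (z i : ℕ)) :=
    fun a b h => Fin.lt_def.mp (hz h)
  have := strictMono_nat_accum hzn (n-1) (by omega) (i : ℕ) i.2 (by omega)
  simp only [Fin.eta] at this
  omega

lemma backward_bound (hn : 1 ≤ n) {z : Fin n → Fin (k + (n - 1 - cfun τ n))}
    (hz : StrictMono z) (j : Fin n) :
    (z (τ.symm j) : ℕ) + cfun τ ((τ.symm j : ℕ)) - (τ.symm j : ℕ) < k := by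
  set i := τ.symm j
  have h1 := z_upper hn hz i
  have h2 : (z ⟨n-1, by omega⟩ : ℕ) < k + (n - 1 - cfun τ n) := (z _).2
  have h3 := cfun_le τ (i : ℕ)
  have h4 := cfun_mono τ (show (i : ℕ) ≤ n - 1 by omega)
  have h5 := cfun_last τ hn
  have h6 := des_le τ
  have h7 : (i : ℕ) < n := i.2
  have h8 := z_lower hz i
  omega

lemma backward_compat (hn : 1 ≤ n) {z : Fin n → Fin (k + (n - 1 - cfun τ n))}
    (hz : StrictMono z) :
    Compat (fun j : Fin n =>
      (z (τ.symm j) : ℕ) + cfun τ ((τ.symm j : ℕ)) - (τ.symm j : ℕ)) τ := by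
  intro j h
  rw [fkey_lt_iff]
  simp only [Equiv.symm_apply_apply, Fin.val_mk]
  have hzj : (z ⟨j, Nat.lt_of_succ_lt h⟩ : ℕ) < z ⟨j+1, h⟩ :=
    Fin.lt_def.mp (hz (Fin.mk_lt_mk.mpr (Nat.lt_succ_self j)))
  have hlow : j ≤ (z ⟨j, Nat.lt_of_succ_lt h⟩ : ℕ) := by
    simpa using z_lower hz ⟨j, Nat.lt_of_succ_lt h⟩
  have hcs := cfun_succ τ j
  have h3 := cfun_le τ j
  by_cases hdes : desAt τ j
  · left
    rw [if_pos hdes] at hcs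
    omega
  · have hne : τ ⟨j, Nat.lt_of_succ_lt h⟩ ≠ τ ⟨j+1, h⟩ := by
      intro hcon
      have := τ.injective hcon
      rw [Fin.ext_iff] at this
      simp at this
    have hτlt : τ ⟨j, Nat.lt_of_succ_lt h⟩ < τ ⟨j+1, h⟩ := by
      rcases lt_or_gt_of_ne hne with hl | hg
      · exact hl
      · exact absurd ((desAt_iff h).mpr hg) hdes
    rw [if_neg hdes] at hcs
    by_cases heq : (z ⟨j, Nat.lt_of_succ_lt h⟩ : ℕ) + cfun τ j - (j:ℕ)
        = (z ⟨j+1, h⟩ : ℕ) + cfun τ (j+1) - ((j:ℕ)+1)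
    · right
      exact ⟨heq, hτlt⟩
    · left
      omega

lemma toZ_strictMono_fin (hn : 1 ≤ n) {w : Fin n → Fin k}
    (hc : Compat (fun i => (w i : ℕ)) τ) :
    StrictMono (fun i : Fin n =>
      (⟨(w (τ i) : ℕ) + ((i : ℕ) - cfun τ (i : ℕ)), compat_bound hn hc i⟩
        : Fin (k + (n - 1 - cfun τ n)))) := by
  intro a b hab
  rw [Fin.lt_def]
  exact compat_strictMono_toZ hc hab

lemma fiber_card_aux (hn : 1 ≤ n) (τ : Equiv.Perm (Fin n)) (k : ℕ) :
    Fintype.card {w : Fin n → Fin k // Compat (fun i => (w i : ℕ)) τ}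
    = Fintype.card {z : Fin n → Fin (k + (n - 1 - cfun τ n)) // StrictMono z} := by
  apply Fintype.card_congr
  refine
    { toFun := fun w => ⟨fun i =>
        ⟨(w.1 (τ i) : ℕ) + ((i : ℕ) - cfun τ (i : ℕ)), compat_bound hn w.2 i⟩,
        toZ_strictMono_fin hn w.2⟩
      invFun := fun z => ⟨fun j =>
        ⟨(z.1 (τ.symm j) : ℕ) + cfun τ ((τ.symm j : ℕ)) - (τ.symm j : ℕ),
          backward_bound hn z.2 j⟩,
        backward_compat hn z.2⟩
      left_inv := ?_
      right_inv := ?_ }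
  · rintro ⟨w, hw⟩
    apply Subtype.ext
    funext j
    apply Fin.ext
    simp only [Equiv.apply_symm_apply]
    have h3 := cfun_le τ ((τ.symm j : ℕ))
    omega
  · rintro ⟨z, hz⟩
    apply Subtype.ext
    funext i
    apply Fin.ext
    simp only [Equiv.symm_apply_apply]
    have h3 := cfun_le τ (i : ℕ)
    have h4 := z_lower hz i
    omega

end Fiber

lemma card_strictMono_maps (N M : ℕ) :
    Fintype.card {z : Fin N → Fin M // StrictMono z} = M.choose N := by
  have e : {z : Fin N → Fin M // StrictMono z} ≃ {s : Finset (Fin M) // s.card = N} :=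
    { toFun := fun z => ⟨Finset.image z.1 Finset.univ, by
        rw [Finset.card_image_of_injective _ z.2.injective, Finset.card_univ,
          Fintype.card_fin]⟩
      invFun := fun s => ⟨fun i => s.1.orderEmbOfFin s.2 i,
        (s.1.orderEmbOfFin s.2).strictMono⟩
      left_inv := by
        rintro ⟨z, hz⟩
        apply Subtype.ext
        funext i
        exact (congrFun (Finset.orderEmbOfFin_unique _
          (fun x => Finset.mem_image_of_mem _ (Finset.mem_univ x)) hz) i).symm
      right_inv := by
        rintro ⟨s, hs⟩
        apply Subtype.ext
        ext x
        simp only [Finset.mem_image, Finset.mem_univ, true_and]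
        constructor
        · rintro ⟨i, rfl⟩
          exact Finset.orderEmbOfFin_mem s hs i
        · intro hx
          have hr := Finset.range_orderEmbOfFin s hs
          have : x ∈ Set.range (s.orderEmbOfFin hs) := by
            rw [hr]; exact hx
          obtain ⟨i, hi⟩ := this
          exact ⟨i, hi⟩ }
  rw [Fintype.card_congr e, Fintype.card_finset_len, Fintype.card_fin]

lemma fiber_card (hn : 1 ≤ n) (τ : Equiv.Perm (Fin n)) (k : ℕ) :
    Fintype.card {w : Fin n → Fin k // sortPerm (fun i => (w i : ℕ)) = τ}
      = (k + (n - 1 - cfun τ n)).choose n := by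
  have hiff : ∀ w : Fin n → Fin k,
      (sortPerm (fun i => (w i : ℕ)) = τ) ↔ Compat (fun i => (w i : ℕ)) τ :=
    fun w => (sorts_iff.symm.trans sorts_iff_compat)
  rw [Fintype.card_congr (Equiv.subtypeEquivRight hiff), fiber_card_aux hn τ k,
    card_strictMono_maps]

lemma BB_eq (hn : 1 ≤ n) (k : ℕ) :
    BB n k = ∑ τ : Equiv.Perm (Fin n),
      MonoidAlgebra.single τ (((k + (n - 1 - cfun τ n)).choose n : ℚ)) := by
  rw [BB]
  rw [← Finset.sum_fiberwise_of_maps_to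
    (g := fun w : Fin n → Fin k => sortPerm (fun i => (w i : ℕ)))
    (fun w _ => Finset.mem_univ _)
    (fun w => MonoidAlgebra.single (sortPerm (fun i => (w i : ℕ))) (1 : ℚ))]
  apply Finset.sum_congr rfl
  intro τ _
  have hstep : ∑ w ∈ Finset.univ.filter
        (fun w : Fin n → Fin k => sortPerm (fun i => (w i : ℕ)) = τ),
        MonoidAlgebra.single (sortPerm (fun i => (w i : ℕ))) (1 : ℚ)
      = ∑ _w ∈ Finset.univ.filter
        (fun w : Fin n → Fin k => sortPerm (fun i => (w i : ℕ)) = τ),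
        MonoidAlgebra.single τ (1 : ℚ) :=
    Finset.sum_congr rfl (fun w hw => by rw [(Finset.mem_filter.mp hw).2])
  rw [hstep, Finset.sum_const, ← Fintype.card_subtype, fiber_card hn τ k]
  simp only [nsmul_eq_mul, MonoidAlgebra.natCast_def, MonoidAlgebra.single_mul_single,
    one_mul, mul_one]

lemma asc_prod (m N : ℕ) : ∏ i ∈ Finset.range N, (m + 1 + i) = (m+1).ascFactorial N := by
  induction N with
  | zero => simp
  | succ N ih =>
    rw [Finset.prod_range_succ, ih, Nat.ascFactorial_succ, mul_comm]

lemma aCoeff_sum_eval (hn : 1 ≤ n) (j k : ℕ) (hj1 : 1 ≤ j) (hjn : j ≤ n) :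
    ∑ l ∈ Finset.range (n+1), aCoeff n l j * (k:ℚ)^l = ((k + (n - j)).choose n : ℚ) := by
  classical
  set P : Polynomial ℚ := ((n.factorial : ℚ))⁻¹ • ∏ i ∈ Finset.Icc 1 n,
    (Polynomial.X + Polynomial.C ((i : ℚ) - (j : ℚ))) with hP
  have hdeg : P.natDegree < n + 1 := by
    have h1 : (∏ i ∈ Finset.Icc 1 n,
        (Polynomial.X + Polynomial.C ((i : ℚ) - (j : ℚ)))).natDegree ≤ n := by
      refine le_trans (Polynomial.natDegree_prod_le _ _) ?_
      calc ∑ i ∈ Finset.Icc 1 n,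
            (Polynomial.X + Polynomial.C ((i : ℚ) - (j : ℚ))).natDegree
          ≤ ∑ i ∈ Finset.Icc 1 n, 1 := by
            apply Finset.sum_le_sum
            intro i _
            rw [Polynomial.natDegree_X_add_C]
        _ = n := by rw [Finset.sum_const, smul_eq_mul, mul_one, Nat.card_Icc]; omega
    calc P.natDegree ≤ _ := Polynomial.natDegree_smul_le _ _
    _ ≤ n := h1
    _ < n + 1 := Nat.lt_succ_self n
  have heval : ∑ l ∈ Finset.range (n+1), aCoeff n l j * (k:ℚ)^l = P.eval (k : ℚ) := by
    rw [Polynomial.eval_eq_sum_range' hdeg]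
    rfl
  rw [heval, hP, Polynomial.eval_smul, Polynomial.eval_prod]
  simp only [Polynomial.eval_add, Polynomial.eval_X, Polynomial.eval_C, smul_eq_mul]
  by_cases hkj : j ≤ k
  · have hfac : ∀ i ∈ Finset.Icc 1 n, (k : ℚ) + ((i : ℚ) - (j : ℚ)) = ((k - j + i : ℕ) : ℚ) := by
      intro i _
      push_cast [Nat.cast_sub hkj]
      ring
    rw [Finset.prod_congr rfl hfac, ← Nat.cast_prod]
    have hnat : ∏ i ∈ Finset.Icc 1 n, (k - j + i) = n.factorial * (k + (n - j)).choose n := by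
      have h1 : Finset.Icc 1 n = Finset.Ico 1 (n+1) := by
        rw [Finset.Ico_add_one_right_eq_Icc]
      rw [h1, Finset.prod_Ico_eq_prod_range]
      have h2 : ∀ i ∈ Finset.range (n + 1 - 1), (k - j + (1 + i)) = ((k-j) + 1 + i) := by
        intro i _; omega
      rw [Finset.prod_congr rfl h2]
      have h3 : n + 1 - 1 = n := by omega
      rw [h3, asc_prod (k-j) n, Nat.ascFactorial_eq_factorial_mul_choose]
      have h4 : k - j + n = k + (n - j) := by omega
      rw [h4]
    rw [hnat]
    push_cast
    have hne : (n.factorial : ℚ) ≠ 0 := by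
      exact_mod_cast n.factorial_ne_zero
    field_simp
  · have hmem : j - k ∈ Finset.Icc 1 n := by
      rw [Finset.mem_Icc]; omega
    rw [Finset.prod_eq_zero hmem (by
      push_cast [Nat.cast_sub (by omega : k ≤ j)]
      ring)]
    have hlt : k + (n - j) < n := by omega
    rw [Nat.choose_eq_zero_of_lt hlt]
    simp

lemma aCoeff_zero_eq (j : ℕ) (hj1 : 1 ≤ j) (hjn : j ≤ n) : aCoeff n 0 j = 0 := by
  unfold aCoeff
  rw [Polynomial.coeff_smul, Polynomial.coeff_zero_eq_eval_zero, Polynomial.eval_prod]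
  have hmem : j ∈ Finset.Icc 1 n := by rw [Finset.mem_Icc]; exact ⟨hj1, hjn⟩
  rw [Finset.prod_eq_zero hmem (by simp)]
  simp

lemma BB_eul (hn : 1 ≤ n) (k : ℕ) :
    BB n k = ∑ l ∈ Finset.range (n+1), ((k:ℚ)^l) • eul n l := by
  rw [BB_eq hn k]
  have hτ : ∀ τ : Equiv.Perm (Fin n),
      (((k + (n - 1 - cfun τ n)).choose n : ℚ))
        = ∑ l ∈ Finset.range (n+1), aCoeff n l (descents τ + 1) * (k:ℚ)^l := by
    intro τ
    have hd := des_le τ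
    have hde := descents_eq τ
    have hjn : descents τ + 1 ≤ n := by omega
    rw [aCoeff_sum_eval hn (descents τ + 1) k (Nat.le_add_left 1 _) hjn]
    have he : k + (n - 1 - cfun τ n) = k + (n - (descents τ + 1)) := by omega
    rw [he]
  calc ∑ τ : Equiv.Perm (Fin n),
        MonoidAlgebra.single τ (((k + (n - 1 - cfun τ n)).choose n : ℚ))
      = ∑ τ : Equiv.Perm (Fin n), ∑ l ∈ Finset.range (n+1),
          MonoidAlgebra.single τ (aCoeff n l (descents τ + 1) * (k:ℚ)^l) := by
        refine Finset.sum_congr rfl (fun τ _ => ?_)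
        rw [hτ τ]
        exact map_sum (MonoidAlgebra.singleAddHom τ) _ _
    _ = ∑ l ∈ Finset.range (n+1), ∑ τ : Equiv.Perm (Fin n),
          MonoidAlgebra.single τ (aCoeff n l (descents τ + 1) * (k:ℚ)^l) :=
        Finset.sum_comm
    _ = ∑ l ∈ Finset.range (n+1), ((k:ℚ)^l) • eul n l := by
        refine Finset.sum_congr rfl (fun l _ => ?_)
        rw [eul, Finset.smul_sum]
        refine Finset.sum_congr rfl (fun τ _ => ?_)
        rw [MonoidAlgebra.smul_single, smul_eq_mul, mul_comm]

lemma eul_zero (hn : 1 ≤ n) : eul n 0 = 0 := by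
  rw [eul]
  apply Finset.sum_eq_zero
  intro σ _
  have hd := des_le σ
  have hde := descents_eq σ
  rw [aCoeff_zero_eq (descents σ + 1) (Nat.le_add_left 1 _) (by omega)]
  simp

lemma BB_one : BB n 1 = 1 := by
  have hs : ∀ w : Fin n → Fin 1, sortPerm (fun i => (w i : ℕ)) = (1 : Equiv.Perm (Fin n)) := by
    intro w
    apply sorts_iff.mp
    unfold Sorts
    have hfun : (fkey (fun i => ((w i : ℕ))) ∘ ⇑(1 : Equiv.Perm (Fin n)))
        = fun i : Fin n => (i : ℕ) := by
      funext i
      simp [fkey, Nat.lt_one_iff.mp (w i).2]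
    rw [hfun]
    intro a b hab
    exact Fin.lt_def.mp hab
  rw [BB]
  rw [Finset.sum_congr rfl (fun w _ => by rw [hs w])]
  rw [Finset.sum_const, Finset.card_univ]
  have hcard : Fintype.card (Fin n → Fin 1) = 1 := by
    simp [Fintype.card_fun]
  rw [hcard, one_smul, MonoidAlgebra.one_def]

lemma vanishing {N : ℕ} (v : ℕ → ℚ)
    (h : ∀ k : ℕ, 1 ≤ k → ∑ l ∈ Finset.range N, v l * (k:ℚ)^l = 0) :
    ∀ l < N, v l = 0 := by
  classical
  set p : Polynomial ℚ := ∑ l ∈ Finset.range N, Polynomial.C (v l) * Polynomial.X ^ l with hp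
  have heval : ∀ x : ℚ, p.eval x = ∑ l ∈ Finset.range N, v l * x^l := by
    intro x
    rw [hp, Polynomial.eval_finset_sum]
    simp
  have hroot : ∀ k : ℕ, p.IsRoot ((k+1 : ℕ) : ℚ) := by
    intro k
    rw [Polynomial.IsRoot, heval]
    exact h (k+1) (Nat.le_add_left 1 k)
  have hzero : p = 0 := by
    apply Polynomial.eq_zero_of_infinite_isRoot
    apply Set.infinite_of_injective_forall_mem
      (f := fun k : ℕ => ((k+1 : ℕ) : ℚ))
    · intro a b hab
      have hab' : a + 1 = b + 1 := Nat.cast_inj.mp hab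
      omega
    · intro k
      exact hroot k
  intro l hl
  have hc := congrArg (fun q => Polynomial.coeff q l) hzero
  simp only [hp, Polynomial.finset_sum_coeff, Polynomial.coeff_C_mul,
    Polynomial.coeff_X_pow, Polynomial.coeff_zero, mul_ite, mul_one, mul_zero] at hc
  rwa [Finset.sum_ite_eq (Finset.range N) l v, if_pos (Finset.mem_range.mpr hl)] at hc

lemma vanishing_alg {N : ℕ} (E : ℕ → MonoidAlgebra ℚ (Equiv.Perm (Fin n)))
    (h : ∀ k : ℕ, 1 ≤ k → ∑ l ∈ Finset.range N, (k:ℚ)^l • E l = 0) :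
    ∀ l < N, E l = 0 := by
  intro l hl
  apply MonoidAlgebra.ext
  apply Finsupp.ext
  intro g
  have hg : ∀ k : ℕ, 1 ≤ k → ∑ l ∈ Finset.range N, ((E l).coeff g) * (k:ℚ)^l = 0 := by
    intro k hk
    have h0 : (∑ l ∈ Finset.range N, (k:ℚ)^l • E l).coeff g = (0 : MonoidAlgebra ℚ (Equiv.Perm (Fin n))).coeff g := by
      rw [h k hk]
    rw [MonoidAlgebra.coeff_sum, Finsupp.finset_sum_apply] at h0
    rw [show (0 : MonoidAlgebra ℚ (Equiv.Perm (Fin n))).coeff g = 0 from rfl] at h0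
    rw [← h0]
    exact Finset.sum_congr rfl (fun l _ => by rw [MonoidAlgebra.coeff_smul_apply, smul_eq_mul, mul_comm])
  have := vanishing (fun l => (E l).coeff g) hg l hl
  simpa using this

lemma main (n : ℕ) (hn : 1 ≤ n) :
    (∀ l l' : ℕ, 1 ≤ l → l ≤ n → 1 ≤ l' → l' ≤ n →
      eul n l * eul n l' = if l = l' then eul n l else 0) ∧
    ∑ l ∈ Finset.Icc 1 n, eul n l = 1 := by
  have key : ∀ a b : ℕ, 1 ≤ a → 1 ≤ b →
      (∑ l ∈ Finset.range (n+1), ((a:ℚ))^l • eul n l) *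
        (∑ l ∈ Finset.range (n+1), ((b:ℚ))^l • eul n l)
      = ∑ l ∈ Finset.range (n+1), (((a:ℚ)) * ((b:ℚ)))^l • eul n l := by
    intro a b ha hb
    rw [← BB_eul hn a, ← BB_eul hn b, BB_mul, BB_eul hn (a*b)]
    refine Finset.sum_congr rfl (fun l _ => ?_)
    norm_cast
  have step0 : ∀ a : ℕ, 1 ≤ a → ∀ l' < n+1,
      (∑ l ∈ Finset.range (n+1), (a:ℚ)^l • (eul n l * eul n l')) = (a:ℚ)^l' • eul n l' := by
    intro a ha
    have h := vanishing_alg (N := n+1)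
      (fun l' => (∑ l ∈ Finset.range (n+1), (a:ℚ)^l • (eul n l * eul n l'))
        - (a:ℚ)^l' • eul n l')
      (by
        intro b hb
        have e1 : ∀ l' : ℕ,
            (b:ℚ)^l' • ((∑ l ∈ Finset.range (n+1), (a:ℚ)^l • (eul n l * eul n l'))
              - (a:ℚ)^l' • eul n l')
            = (∑ l ∈ Finset.range (n+1), ((a:ℚ)^l * (b:ℚ)^l') • (eul n l * eul n l'))
              - ((a:ℚ)^l' * (b:ℚ)^l') • eul n l' := by
          intro l'
          rw [smul_sub, Finset.smul_sum]
          congr 1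
          · exact Finset.sum_congr rfl (fun l _ => by rw [smul_smul, mul_comm])
          · rw [smul_smul, mul_comm]
        rw [Finset.sum_congr rfl (fun l' _ => e1 l'), Finset.sum_sub_distrib]
        have hX : ∑ l' ∈ Finset.range (n+1), ∑ l ∈ Finset.range (n+1),
            ((a:ℚ)^l * (b:ℚ)^l') • (eul n l * eul n l')
            = (∑ l ∈ Finset.range (n+1), (a:ℚ)^l • eul n l) *
              (∑ l ∈ Finset.range (n+1), (b:ℚ)^l • eul n l) := by
          rw [Finset.sum_mul_sum, Finset.sum_comm]
          exact Finset.sum_congr rfl (fun l' _ => Finset.sum_congr rfl (fun l _ => by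
            rw [smul_mul_smul_comm]))
        have hY : ∑ l' ∈ Finset.range (n+1), ((a:ℚ)^l' * (b:ℚ)^l') • eul n l'
            = ∑ l' ∈ Finset.range (n+1), (((a:ℚ) * (b:ℚ)))^l' • eul n l' :=
          Finset.sum_congr rfl (fun l' _ => by rw [mul_pow])
        rw [hX, hY, key a b ha hb, sub_self])
    intro l' hl'
    exact sub_eq_zero.mp (h l' hl')
  have orth : ∀ l' < n+1, ∀ l < n+1,
      eul n l * eul n l' = if l = l' then eul n l' else 0 := by
    intro l' hl'
    have h := vanishing_alg (N := n+1)
      (fun l => eul n l * eul n l' - if l = l' then eul n l' else 0)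
      (by
        intro a ha
        have e1 : ∀ l : ℕ,
            (a:ℚ)^l • (eul n l * eul n l' - if l = l' then eul n l' else 0)
            = (a:ℚ)^l • (eul n l * eul n l') - if l = l' then (a:ℚ)^l • eul n l' else 0 := by
          intro l
          rw [smul_sub]
          congr 1
          split <;> simp
        rw [Finset.sum_congr rfl (fun l _ => e1 l), Finset.sum_sub_distrib,
          step0 a ha l' hl',
          Finset.sum_ite_eq' (Finset.range (n+1)) l' (fun l => (a:ℚ)^l • eul n l'),
          if_pos (Finset.mem_range.mpr hl'), sub_self])
    intro l hl
    exact sub_eq_zero.mp (h l hl)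
  constructor
  · intro l l' hl1 hln hl'1 hl'n
    have h := orth l' (by omega) l (by omega)
    by_cases hll : l = l'
    · subst hll; simpa using h
    · rw [h, if_neg hll, if_neg hll]
  · have h1 := BB_eul hn 1
    rw [BB_one] at h1
    have h2 : ∑ l ∈ Finset.range (n+1), ((1:ℕ):ℚ)^l • eul n l
        = ∑ l ∈ Finset.range (n+1), eul n l :=
      Finset.sum_congr rfl (fun l _ => by norm_num)
    have h3 : Finset.range (n+1) = insert 0 (Finset.Icc 1 n) := by
      ext x
      simp only [Finset.mem_range, Finset.mem_Icc, Finset.mem_insert]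
      omega
    rw [h2, h3, Finset.sum_insert (by simp), eul_zero hn, zero_add] at h1
    exact h1.symm

end EulerAux

/-- The Eulerian elements `ẽ⁽¹⁾ₙ, …, ẽ⁽ⁿ⁾ₙ` are mutually orthogonal idempotents
in `ℚ[Sₙ]` summing to the identity. -/
theorem eulerian_idempotents_orthogonal_sum_one (n : ℕ) (hn : 1 ≤ n) :
    (∀ l l' : ℕ, 1 ≤ l → l ≤ n → 1 ≤ l' → l' ≤ n →
      eul n l * eul n l' = if l = l' then eul n l else 0) ∧
    ∑ l ∈ Finset.Icc 1 n, eul n l = 1 := EulerAux.main n hn
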